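/- arXiv:2507.19696 — 2 statements merged into one kernel-verified Lean document; each statement's English description precedes it below -/
import Mathlib

section
/- The function M is twice differentiable on the interior of Θ, and its first two derivatives may be obtained by differentiating under the expectation: M'(θ) = E[ṁ_θ(Y₁,γ₁)] and M''(θ) = E[m̈_θ(Y₁,γ₁)], where ṁ_θ(y,γ) = γφ(y|θ)(y−θ)/((1−γ)φ(y|0) + γφ(y|θ)) and m̈_θ(y,γ) denote the first and second partial derivatives of θ ↦ m_θ(y,γ). -/
open MeasureTheory ProbabilityTheory Filter

/-- The `N(θ,1)` density `φ(y|θ)`. -/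
noncomputable def npdf (y θ : ℝ) : ℝ :=
  Real.exp (-(y - θ) ^ 2 / 2) / Real.sqrt (2 * Real.pi)

/-- `m_θ(y,γ) = log((1−γ)φ(y|0) + γφ(y|θ))`. -/
noncomputable def mFun (θ : ℝ) (p : ℝ × ℝ) : ℝ :=
  Real.log ((1 - p.2) * npdf p.1 0 + p.2 * npdf p.1 θ)

/-- The first partial derivative `ṁ_θ(y,γ) = γφ(y|θ)(y−θ)/((1−γ)φ(y|0) + γφ(y|θ))`. -/
noncomputable def mDot (θ : ℝ) (p : ℝ × ℝ) : ℝ :=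
  p.2 * npdf p.1 θ * (p.1 - θ) / ((1 - p.2) * npdf p.1 0 + p.2 * npdf p.1 θ)

/-! ### Auxiliary definitions and lemmas -/

/-- The mixture density `(1−γ)φ(y|0) + γφ(y|θ)`. -/
noncomputable def Dfun (θ : ℝ) (p : ℝ × ℝ) : ℝ :=
  (1 - p.2) * npdf p.1 0 + p.2 * npdf p.1 θ

/-- The second partial derivative of `θ ↦ m_θ(y,γ)`. -/
noncomputable def mDDot (θ : ℝ) (p : ℝ × ℝ) : ℝ :=
  (p.2 * npdf p.1 θ * ((p.1 - θ)^2 - 1) * Dfun θ p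
    - (p.2 * npdf p.1 θ * (p.1 - θ))^2) / (Dfun θ p)^2

lemma npdf_pos (y θ : ℝ) : 0 < npdf y θ := by unfold npdf; positivity

lemma sqrt_two_pi_ge_one : (1:ℝ) ≤ Real.sqrt (2*Real.pi) := by
  rw [show (1:ℝ) = Real.sqrt 1 by simp]
  exact Real.sqrt_le_sqrt (by nlinarith [Real.pi_gt_three])

lemma npdf_le_one (y θ : ℝ) : npdf y θ ≤ 1 := by
  unfold npdf
  rw [div_le_one (by positivity)]
  have h1 : Real.exp (-(y-θ)^2/2) ≤ 1 := by
    calc Real.exp (-(y-θ)^2/2) ≤ Real.exp 0 :=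
          Real.exp_le_exp.mpr (by nlinarith [sq_nonneg (y-θ)])
      _ = 1 := Real.exp_zero
  linarith [sqrt_two_pi_ge_one]

lemma log_npdf (y θ : ℝ) :
    Real.log (npdf y θ) = -(y - θ)^2/2 - Real.log (Real.sqrt (2*Real.pi)) := by
  unfold npdf
  rw [Real.log_div (Real.exp_ne_zero _) (by positivity), Real.log_exp]

lemma log_sqrt_two_pi_le : Real.log (Real.sqrt (2*Real.pi)) ≤ 3 := by
  have h1 : Real.sqrt (2*Real.pi) ≤ 3 := by
    rw [show (3:ℝ) = Real.sqrt 9 by rw [show (9:ℝ) = 3^2 by norm_num, Real.sqrt_sq]; norm_num]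
    exact Real.sqrt_le_sqrt (by nlinarith [Real.pi_le_four])
  have := Real.log_le_sub_one_of_pos (show (0:ℝ) < Real.sqrt (2*Real.pi) by positivity)
  linarith

lemma log_sqrt_two_pi_nonneg : 0 ≤ Real.log (Real.sqrt (2*Real.pi)) :=
  Real.log_nonneg sqrt_two_pi_ge_one

lemma hasDerivAt_npdf (y θ : ℝ) :
    HasDerivAt (fun θ => npdf y θ) (npdf y θ * (y - θ)) θ := by
  have h1 : HasDerivAt (fun θ : ℝ => -(y - θ)^2/2) (y - θ) θ := by
    have h2 : HasDerivAt (fun θ : ℝ => y - θ) (-1) θ := (hasDerivAt_id θ).const_sub y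
    have h3 := ((h2.pow 2).neg).div_const 2
    refine h3.congr_deriv ?_
    ring
  have h4 := (h1.exp).div_const (Real.sqrt (2*Real.pi))
  refine h4.congr_deriv ?_
  unfold npdf
  ring

lemma Dfun_pos {p : ℝ × ℝ} (h0 : 0 ≤ p.2) (h1 : p.2 ≤ 1) (θ : ℝ) : 0 < Dfun θ p := by
  unfold Dfun
  rcases eq_or_lt_of_le h0 with h | h
  · rw [← h]; simp; nlinarith [npdf_pos p.1 0]
  · nlinarith [npdf_pos p.1 0, npdf_pos p.1 θ]

lemma hasDerivAt_Dfun (p : ℝ × ℝ) (θ : ℝ) :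
    HasDerivAt (fun θ => Dfun θ p) (p.2 * (npdf p.1 θ * (p.1 - θ))) θ :=
  ((hasDerivAt_npdf p.1 θ).const_mul p.2).const_add _

lemma hasDerivAt_mFun {p : ℝ × ℝ} (h0 : 0 ≤ p.2) (h1 : p.2 ≤ 1) (θ : ℝ) :
    HasDerivAt (fun θ => mFun θ p) (mDot θ p) θ := by
  have h := (hasDerivAt_Dfun p θ).log (Dfun_pos h0 h1 θ).ne'
  refine h.congr_deriv ?_
  unfold mDot Dfun
  ring

lemma hasDerivAt_mDot {p : ℝ × ℝ} (h0 : 0 ≤ p.2) (h1 : p.2 ≤ 1) (θ : ℝ) :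
    HasDerivAt (fun θ => mDot θ p) (mDDot θ p) θ := by
  have hN : HasDerivAt (fun θ => p.2 * npdf p.1 θ * (p.1 - θ))
      (p.2 * (npdf p.1 θ * (p.1 - θ)) * (p.1 - θ) + p.2 * npdf p.1 θ * (-1)) θ :=
    ((hasDerivAt_npdf p.1 θ).const_mul p.2).mul ((hasDerivAt_id θ).const_sub p.1)
  have h := hN.div (hasDerivAt_Dfun p θ) (Dfun_pos h0 h1 θ).ne'
  refine h.congr_deriv ?_
  unfold mDDot Dfun
  ring

lemma ratio_mem {p : ℝ × ℝ} (h0 : 0 ≤ p.2) (h1 : p.2 ≤ 1) (θ : ℝ) :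
    0 ≤ p.2 * npdf p.1 θ / Dfun θ p ∧ p.2 * npdf p.1 θ / Dfun θ p ≤ 1 := by
  have hD := Dfun_pos h0 h1 θ
  constructor
  · exact div_nonneg (mul_nonneg h0 (npdf_pos p.1 θ).le) hD.le
  · rw [div_le_one hD]
    unfold Dfun
    nlinarith [npdf_pos p.1 0]

lemma abs_mDot_le {p : ℝ × ℝ} (h0 : 0 ≤ p.2) (h1 : p.2 ≤ 1) (θ : ℝ) :
    |mDot θ p| ≤ |p.1 - θ| := by
  have hD := Dfun_pos h0 h1 θ
  obtain ⟨hr0, hr1⟩ := ratio_mem h0 h1 θ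
  have heq : mDot θ p = (p.2 * npdf p.1 θ / Dfun θ p) * (p.1 - θ) := by
    unfold mDot Dfun; ring
  rw [heq, abs_mul, abs_of_nonneg hr0]
  exact mul_le_of_le_one_left (abs_nonneg _) hr1

lemma abs_mDDot_le {p : ℝ × ℝ} (h0 : 0 ≤ p.2) (h1 : p.2 ≤ 1) (θ : ℝ) :
    |mDDot θ p| ≤ 2 * (p.1 - θ)^2 + 1 := by
  have hD := Dfun_pos h0 h1 θ
  obtain ⟨hr0, hr1⟩ := ratio_mem h0 h1 θ
  set r := p.2 * npdf p.1 θ / Dfun θ p with hr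
  have heq : mDDot θ p = r * ((p.1 - θ)^2 - 1) - (r * (p.1 - θ))^2 := by
    rw [hr]
    unfold mDDot
    field_simp
  rw [heq, abs_le]
  constructor <;> nlinarith [sq_nonneg (p.1 - θ), mul_nonneg hr0 (sq_nonneg (p.1 - θ)),
    mul_nonneg (mul_nonneg hr0 hr0) (sq_nonneg (p.1 - θ)),
    mul_nonneg (sub_nonneg.2 hr1) (sq_nonneg (p.1 - θ)), mul_nonneg hr0 (sub_nonneg.2 hr1)]

lemma abs_mFun_le {p : ℝ × ℝ} (h0 : 0 ≤ p.2) (h1 : p.2 ≤ 1) (θ : ℝ) :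
    |mFun θ p| ≤ (p.1)^2/2 + (p.1 - θ)^2/2 + 2 * Real.log (Real.sqrt (2*Real.pi)) := by
  have hA := npdf_pos p.1 0
  have hB := npdf_pos p.1 θ
  have hD := Dfun_pos h0 h1 θ
  have hmFun : mFun θ p = Real.log (Dfun θ p) := rfl
  have hle : Real.log (npdf p.1 0) + Real.log (npdf p.1 θ) ≤ Real.log (Dfun θ p) := by
    rcases le_total (npdf p.1 0) (npdf p.1 θ) with h | h
    · have h2 : npdf p.1 0 ≤ Dfun θ p := by unfold Dfun; nlinarith
      have h3 := Real.log_le_log hA h2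
      have h4 : Real.log (npdf p.1 θ) ≤ 0 := Real.log_nonpos hB.le (npdf_le_one _ _)
      linarith
    · have h2 : npdf p.1 θ ≤ Dfun θ p := by unfold Dfun; nlinarith
      have h3 := Real.log_le_log hB h2
      have h4 : Real.log (npdf p.1 0) ≤ 0 := Real.log_nonpos hA.le (npdf_le_one _ _)
      linarith
  have hD1 : Dfun θ p ≤ 1 := by
    unfold Dfun; nlinarith [npdf_le_one p.1 0, npdf_le_one p.1 θ]
  have hlogD : Real.log (Dfun θ p) ≤ 0 := Real.log_nonpos hD.le hD1
  rw [hmFun, abs_of_nonpos hlogD]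
  have e0 := log_npdf p.1 0
  have e1 := log_npdf p.1 θ
  nlinarith [hle]

lemma integrable_one_add_sq : Integrable (fun y : ℝ => 1 + y^2) (gaussianReal 0 1) := by
  have hv : (1 : NNReal) ≠ 0 := one_ne_zero
  rw [gaussianReal_of_var_ne_zero 0 hv]
  rw [integrable_withDensity_iff (measurable_gaussianPDF 0 1)
    (Filter.Eventually.of_forall fun x => ENNReal.ofReal_lt_top)]
  have hEq : (fun y : ℝ => (1 + y^2) * (gaussianPDF 0 1 y).toReal)
      = fun y : ℝ => (1 + y^2) * gaussianPDFReal 0 1 y := by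
    ext y
    rw [gaussianPDF, ENNReal.toReal_ofReal (gaussianPDFReal_nonneg 0 1 y)]
  rw [hEq]
  have hint : Integrable (fun y : ℝ => 5 * (Real.sqrt (2*Real.pi))⁻¹
      * Real.exp (-(4:ℝ)⁻¹ * y^2)) volume :=
    (integrable_exp_neg_mul_sq (by norm_num : (0:ℝ) < 4⁻¹)).const_mul _
  refine hint.mono' ?_ ?_
  · exact (((measurable_id.pow_const 2).const_add 1).mul
      (measurable_gaussianPDFReal 0 1)).aestronglyMeasurable
  · refine Filter.Eventually.of_forall fun y => ?_
    have hg : gaussianPDFReal 0 1 y = (Real.sqrt (2*Real.pi))⁻¹ * Real.exp (-(y^2)/2) := by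
      simp [gaussianPDFReal]
    rw [Real.norm_eq_abs, hg]
    have hs : (0:ℝ) < (Real.sqrt (2*Real.pi))⁻¹ := by positivity
    have he : Real.exp (-(y^2)/2) = Real.exp (-(4:ℝ)⁻¹*y^2) * Real.exp (-(4:ℝ)⁻¹*y^2) := by
      rw [← Real.exp_add]; ring_nf
    have he0 : 0 < Real.exp (-(4:ℝ)⁻¹*y^2) := Real.exp_pos _
    have he1 : Real.exp (-(4:ℝ)⁻¹*y^2) ≤ 1 := by
      rw [← Real.exp_zero]
      exact Real.exp_le_exp.mpr (by nlinarith [sq_nonneg y])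
    have hy2 : y^2 * Real.exp (-(4:ℝ)⁻¹*y^2) ≤ 4 := by
      have h4 := Real.add_one_le_exp ((4:ℝ)⁻¹*y^2)
      rw [show -(4:ℝ)⁻¹*y^2 = -((4:ℝ)⁻¹*y^2) by ring, Real.exp_neg]
      rw [mul_inv_le_iff₀ (Real.exp_pos _)]
      nlinarith
    rw [abs_of_nonneg (by positivity)]
    rw [he]
    nlinarith [mul_nonneg hs.le he0.le, sq_nonneg y,
      mul_le_mul_of_nonneg_left hy2 hs.le, mul_le_mul_of_nonneg_left he1 hs.le,
      mul_nonneg (mul_nonneg hs.le he0.le) (sq_nonneg y)]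

lemma continuous_npdf_fst (θ : ℝ) : Continuous fun p : ℝ × ℝ => npdf p.1 θ := by
  unfold npdf
  fun_prop

lemma continuous_Dfun (θ : ℝ) : Continuous fun p : ℝ × ℝ => Dfun θ p := by
  unfold Dfun npdf
  fun_prop

lemma aesm_mFun (θ : ℝ) (μ : Measure (ℝ × ℝ)) : AEStronglyMeasurable (mFun θ) μ := by
  have h : Measurable (mFun θ) := by
    unfold mFun
    exact ((continuous_Dfun θ).measurable).log
  exact h.aestronglyMeasurable

lemma aesm_mDot (θ : ℝ) (μ : Measure (ℝ × ℝ)) : AEStronglyMeasurable (mDot θ) μ := by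
  have h : Measurable (mDot θ) := by
    unfold mDot
    exact (((measurable_snd.mul (continuous_npdf_fst θ).measurable).mul
      (measurable_fst.sub measurable_const)).div (continuous_Dfun θ).measurable)
  exact h.aestronglyMeasurable

lemma aesm_mDDot (θ : ℝ) (μ : Measure (ℝ × ℝ)) : AEStronglyMeasurable (mDDot θ) μ := by
  have h : Measurable (mDDot θ) := by
    unfold mDDot
    apply Measurable.div
    · apply Measurable.sub
      · exact (((measurable_snd.mul (continuous_npdf_fst θ).measurable).mul
          (((measurable_fst.sub measurable_const).pow_const 2).sub measurable_const)).mul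
          (continuous_Dfun θ).measurable)
      · exact ((measurable_snd.mul (continuous_npdf_fst θ).measurable).mul
          (measurable_fst.sub measurable_const)).pow_const 2
    · exact (continuous_Dfun θ).measurable.pow_const 2
  exact h.aestronglyMeasurable

lemma integrable_prod_one_add_sq (G : Measure ℝ) [IsProbabilityMeasure G] (C : ℝ) :
    Integrable (fun p : ℝ × ℝ => C * (1 + p.1^2)) ((gaussianReal 0 1).prod G) := by
  have hmap : Measure.map Prod.fst ((gaussianReal 0 1).prod G) = gaussianReal 0 1 := by
    rw [Measure.map_fst_prod]
    simp
  have h1 : Integrable (fun y : ℝ => 1 + y^2)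
      (Measure.map Prod.fst ((gaussianReal 0 1).prod G)) := by
    rw [hmap]; exact integrable_one_add_sq
  have h2 := (integrable_map_measure h1.aestronglyMeasurable measurable_fst.aemeasurable).mp h1
  exact h2.const_mul C

lemma ae_snd_mem (G : Measure ℝ) [IsProbabilityMeasure G]
    (hG : ∀ᵐ x ∂G, x ∈ Set.Icc (0 : ℝ) 1) :
    ∀ᵐ p : ℝ × ℝ ∂((gaussianReal 0 1).prod G), p.2 ∈ Set.Icc (0:ℝ) 1 := by
  rw [ae_iff]
  have hset : {p : ℝ × ℝ | ¬ p.2 ∈ Set.Icc (0:ℝ) 1}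
      = Set.univ ×ˢ {x : ℝ | ¬ x ∈ Set.Icc (0:ℝ) 1} := by
    ext p; simp [Set.mem_prod]
  rw [hset, Measure.prod_prod, ae_iff.mp hG, mul_zero]

/-- Under the null model, `M(θ) = E[m_θ(Y₁,γ₁)]` is twice differentiable on the interior
of `Θ = [−K,K]`, and its first two derivatives are obtained by differentiating under the
expectation: `M'(θ) = E[ṁ_θ(Y₁,γ₁)]` and `M''(θ) = E[m̈_θ(Y₁,γ₁)]`, where `m̈_θ` is the
second partial derivative of `θ ↦ m_θ(y,γ)`. -/
theorem stmt12 (G : Measure ℝ) [IsProbabilityMeasure G]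
    (hG : ∀ᵐ x ∂G, x ∈ Set.Icc (0 : ℝ) 1)
    (hVar : 0 < (∫ x, x ^ 2 ∂G) - (∫ x, x ∂G) ^ 2)
    (hlog : Integrable (fun x => -Real.log (1 - x)) G)
    (K : ℝ) (hK : 0 < K)
    (M : ℝ → ℝ) (hM : ∀ θ, M θ = ∫ p, mFun θ p ∂((gaussianReal 0 1).prod G)) :
    ∀ θ ∈ Set.Ioo (-K) K,
      HasDerivAt M (∫ p, mDot θ p ∂((gaussianReal 0 1).prod G)) θ ∧
        HasDerivAt (fun t => ∫ p, mDot t p ∂((gaussianReal 0 1).prod G))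
          (∫ p, deriv (deriv fun s => mFun s p) θ ∂((gaussianReal 0 1).prod G)) θ := by
  intro θ₀ hθ₀
  set μp := (gaussianReal 0 1).prod G with hμp
  have hae := ae_snd_mem G hG
  -- integrability of mFun θ₀
  have hint0 : Integrable (mFun θ₀) μp := by
    refine (integrable_prod_one_add_sq G (θ₀^2 + 8)).mono' (aesm_mFun θ₀ μp) ?_
    filter_upwards [hae] with p hp
    have h := abs_mFun_le hp.1 hp.2 θ₀
    rw [Real.norm_eq_abs]
    nlinarith [log_sqrt_two_pi_le, log_sqrt_two_pi_nonneg, sq_nonneg p.1,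
      sq_nonneg (p.1 - θ₀), sq_nonneg (p.1 + θ₀), sq_nonneg (p.1 * θ₀)]
  -- bound for mDot on the ball
  have hbnd1 : ∀ᵐ p ∂μp, ∀ x ∈ Metric.ball θ₀ 1,
      ‖mDot x p‖ ≤ (|θ₀| + 2) * (1 + p.1^2) := by
    filter_upwards [hae] with p hp
    intro x hx
    rw [Real.norm_eq_abs]
    have h := abs_mDot_le hp.1 hp.2 x
    have hxb : |x - θ₀| < 1 := by rwa [Metric.mem_ball, Real.dist_eq] at hx
    have hx2 : |x| ≤ |θ₀| + 1 := by
      have := abs_sub_abs_le_abs_sub x θ₀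
      linarith
    have h2 : |p.1 - x| ≤ |p.1| + |x| := abs_sub _ _
    nlinarith [sq_abs p.1, abs_nonneg p.1, abs_nonneg θ₀, sq_nonneg (|p.1| - 1)]
  -- differentiability of mFun
  have hdiff1 : ∀ᵐ p ∂μp, ∀ x ∈ Metric.ball θ₀ 1,
      HasDerivAt (fun x => mFun x p) (mDot x p) x := by
    filter_upwards [hae] with p hp
    exact fun x _ => hasDerivAt_mFun hp.1 hp.2 x
  obtain ⟨hIntDot, hDeriv1⟩ := hasDerivAt_integral_of_dominated_loc_of_deriv_le
    (F := mFun) (F' := mDot) (bound := fun p : ℝ × ℝ => (|θ₀| + 2) * (1 + p.1^2))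
    (Metric.ball_mem_nhds θ₀ one_pos) (Filter.Eventually.of_forall fun x => aesm_mFun x μp) hint0
    (aesm_mDot θ₀ μp) hbnd1 (integrable_prod_one_add_sq G _) hdiff1
  -- bound for mDDot on the ball
  have hbnd2 : ∀ᵐ p ∂μp, ∀ x ∈ Metric.ball θ₀ 1,
      ‖mDDot x p‖ ≤ (2*(|θ₀| + 2)^2 + 3) * (1 + p.1^2) := by
    filter_upwards [hae] with p hp
    intro x hx
    rw [Real.norm_eq_abs]
    have h := abs_mDDot_le hp.1 hp.2 x
    have hxb : |x - θ₀| < 1 := by rwa [Metric.mem_ball, Real.dist_eq] at hx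
    have hx2 : |x| ≤ |θ₀| + 1 := by
      have := abs_sub_abs_le_abs_sub x θ₀
      linarith
    have h2 : |p.1 - x| ≤ |p.1| + |x| := abs_sub _ _
    have h3 : |p.1 - x| * |p.1 - x| ≤ (|p.1| + |θ₀| + 1) * (|p.1| + |θ₀| + 1) :=
      mul_self_le_mul_self (abs_nonneg _) (by linarith)
    have h4 : (p.1 - x)^2 = |p.1 - x| * |p.1 - x| := by rw [abs_mul_abs_self]; ring
    nlinarith [sq_abs p.1, abs_nonneg p.1, abs_nonneg θ₀, sq_nonneg (|p.1| - 1),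
      mul_nonneg (abs_nonneg θ₀) (sq_nonneg (|p.1| - 1)),
      mul_nonneg (mul_nonneg (abs_nonneg θ₀) (abs_nonneg θ₀)) (sq_nonneg p.1)]
  have hdiff2 : ∀ᵐ p ∂μp, ∀ x ∈ Metric.ball θ₀ 1,
      HasDerivAt (fun x => mDot x p) (mDDot x p) x := by
    filter_upwards [hae] with p hp
    exact fun x _ => hasDerivAt_mDot hp.1 hp.2 x
  obtain ⟨_, hDeriv2⟩ := hasDerivAt_integral_of_dominated_loc_of_deriv_le
    (F := mDot) (F' := mDDot) (bound := fun p : ℝ × ℝ => (2*(|θ₀| + 2)^2 + 3) * (1 + p.1^2))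
    (Metric.ball_mem_nhds θ₀ one_pos) (Filter.Eventually.of_forall fun x => aesm_mDot x μp) hIntDot
    (aesm_mDDot θ₀ μp) hbnd2 (integrable_prod_one_add_sq G _) hdiff2
  constructor
  · have hMeq : M = fun x => ∫ p, mFun x p ∂μp := funext hM
    rw [hMeq]
    exact hDeriv1
  · have hcongr : ∫ p, deriv (deriv fun s => mFun s p) θ₀ ∂μp = ∫ p, mDDot θ₀ p ∂μp := by
      refine integral_congr_ae ?_
      filter_upwards [hae] with p hp
      have h1 : (deriv fun s => mFun s p) = fun s => mDot s p :=
        funext fun s => (hasDerivAt_mFun hp.1 hp.2 s).deriv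
      rw [h1]
      exact (hasDerivAt_mDot hp.1 hp.2 θ₀).deriv
    rw [hcongr]
    exact hDeriv2
end

section
/- θ* = 0 is the unique maximizer of M over Θ: for every θ ∈ Θ with θ ≠ 0, M(θ) < M(0). -/
open MeasureTheory ProbabilityTheory Filter

namespace Stmt13Aux

open Real

lemma npdf_pos (y θ : ℝ) : 0 < npdf y θ :=
  div_pos (Real.exp_pos _) (Real.sqrt_pos.2 (by positivity))

lemma npdf_mul (y θ : ℝ) : npdf y θ = npdf y 0 * Real.exp (θ * y - θ ^ 2 / 2) := by
  unfold npdf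
  rw [div_mul_eq_mul_div, ← Real.exp_add]
  ring_nf

lemma pdf_eq (θ y : ℝ) : gaussianPDFReal θ 1 y = npdf y θ := by
  simp only [gaussianPDFReal, npdf, NNReal.coe_one, mul_one]
  rw [inv_mul_eq_div]

lemma pdf_eq' (θ : ℝ) : gaussianPDFReal θ 1 = fun y => npdf y θ := funext (pdf_eq θ)

lemma gaussianReal_eq :
    gaussianReal 0 1 = volume.withDensity
      (fun y => ((gaussianPDFReal 0 1 y).toNNReal : ENNReal)) := by
  rw [gaussianReal_of_var_ne_zero _ one_ne_zero]
  rfl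

lemma meas_pdfnn : Measurable (fun y => (gaussianPDFReal 0 1 y).toNNReal) :=
  (measurable_gaussianPDFReal 0 1).real_toNNReal

lemma smul_fun_eq (g : ℝ → ℝ) :
    (fun y => (gaussianPDFReal 0 1 y).toNNReal • g y) = fun y => npdf y 0 * g y := by
  funext y
  rw [NNReal.smul_def, Real.coe_toNNReal _ (gaussianPDFReal_nonneg _ _ _), pdf_eq,
    smul_eq_mul]

lemma integrable_gaussian_iff (g : ℝ → ℝ) :
    Integrable g (gaussianReal 0 1) ↔ Integrable (fun y => npdf y 0 * g y) volume := by
  rw [gaussianReal_eq, integrable_withDensity_iff_integrable_smul meas_pdfnn, smul_fun_eq]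

lemma integral_gaussian_eq (g : ℝ → ℝ) :
    ∫ y, g y ∂(gaussianReal 0 1) = ∫ y, npdf y 0 * g y := by
  rw [gaussianReal_eq, integral_withDensity_eq_integral_smul meas_pdfnn, smul_fun_eq]

lemma continuous_npdf (θ : ℝ) : Continuous (fun y => npdf y θ) := by
  unfold npdf
  fun_prop

lemma int_npdf (θ : ℝ) : Integrable (fun y => npdf y θ) volume := by
  rw [← pdf_eq']; exact integrable_gaussianPDFReal θ 1

lemma integral_npdf (θ : ℝ) : ∫ y, npdf y θ = 1 := by
  rw [← pdf_eq']; exact integral_gaussianPDFReal_eq_one θ one_ne_zero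

lemma int_exp (θ : ℝ) :
    Integrable (fun y => Real.exp (θ * y - θ ^ 2 / 2)) (gaussianReal 0 1) := by
  rw [integrable_gaussian_iff]
  refine (int_npdf θ).congr (Eventually.of_forall fun y => ?_)
  exact npdf_mul y θ

lemma integral_exp (θ : ℝ) :
    ∫ y, Real.exp (θ * y - θ ^ 2 / 2) ∂(gaussianReal 0 1) = 1 := by
  rw [integral_gaussian_eq]
  rw [show (fun y => npdf y 0 * Real.exp (θ * y - θ ^ 2 / 2)) = fun y => npdf y θ from
    funext fun y => (npdf_mul y θ).symm]
  exact integral_npdf θ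

lemma int_sq : Integrable (fun y => y ^ 2) (gaussianReal 0 1) := by
  rw [integrable_gaussian_iff]
  refine Integrable.mono' ((integrable_exp_neg_mul_sq (by norm_num : (0:ℝ) < 1/4)).const_mul
    (4 / Real.sqrt (2 * Real.pi)))
    (((continuous_npdf 0).mul (continuous_pow 2)).aestronglyMeasurable)
    (Eventually.of_forall fun y => ?_)
  have h1 : y ^ 2 ≤ 4 * Real.exp (y ^ 2 / 4) := by
    nlinarith [Real.add_one_le_exp (y ^ 2 / 4)]
  have h2 : Real.exp (-(y - 0) ^ 2 / 2) * Real.exp (y ^ 2 / 4) = Real.exp (-(1/4) * y ^ 2) := by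
    rw [← Real.exp_add]; ring_nf
  have hs : 0 < Real.sqrt (2 * Real.pi) := Real.sqrt_pos.2 (by positivity)
  rw [Real.norm_eq_abs, abs_of_nonneg (mul_nonneg (npdf_pos y 0).le (sq_nonneg y))]
  unfold npdf
  rw [div_mul_eq_mul_div, div_le_iff₀ hs]
  calc Real.exp (-(y - 0) ^ 2 / 2) * y ^ 2
      ≤ Real.exp (-(y - 0) ^ 2 / 2) * (4 * Real.exp (y ^ 2 / 4)) := by
        gcongr
    _ = 4 * Real.exp (-(1/4) * y ^ 2) := by rw [← h2]; ring
    _ = 4 / Real.sqrt (2 * Real.pi) * Real.exp (-(1/4) * y ^ 2) * Real.sqrt (2 * Real.pi) := by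
        field_simp
  
lemma int_abs : Integrable (fun y => |y|) (gaussianReal 0 1) := by
  refine Integrable.mono' ((integrable_const (1:ℝ)).add int_sq)
    measurable_abs.aestronglyMeasurable (Eventually.of_forall fun y => ?_)
  rw [Real.norm_eq_abs, abs_abs]
  show |y| ≤ 1 + y ^ 2
  nlinarith [sq_abs y, sq_nonneg (|y| - 1)]

lemma int_log_npdf : Integrable (fun y => Real.log (npdf y 0)) (gaussianReal 0 1) := by
  have h : (fun y => Real.log (npdf y 0)) =
      fun y => (-(1:ℝ)/2) * y ^ 2 - Real.log (Real.sqrt (2 * Real.pi)) := by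
    funext y
    unfold npdf
    rw [Real.log_div (Real.exp_ne_zero _) (ne_of_gt (Real.sqrt_pos.2 (by positivity))),
      Real.log_exp]
    ring
  rw [h]
  exact (int_sq.const_mul _).sub (integrable_const _)

end Stmt13Aux

namespace Stmt13Aux

variable {G : Measure ℝ} [IsProbabilityMeasure G]

lemma map_fst_eq : ((gaussianReal 0 1).prod G).map Prod.fst = gaussianReal 0 1 := by
  simp

lemma map_snd_eq : ((gaussianReal 0 1).prod G).map Prod.snd = G := by
  simp

lemma int_fst {g : ℝ → ℝ} (hg : Integrable g (gaussianReal 0 1)) :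
    Integrable (fun p : ℝ × ℝ => g p.1) ((gaussianReal 0 1).prod G) := by
  rw [← map_fst_eq (G := G)] at hg
  exact (integrable_map_measure hg.1 measurable_fst.aemeasurable).1 hg

lemma int_snd {g : ℝ → ℝ} (hg : Integrable g G) :
    Integrable (fun p : ℝ × ℝ => g p.2) ((gaussianReal 0 1).prod G) := by
  rw [← map_snd_eq (G := G)] at hg
  exact (integrable_map_measure hg.1 measurable_snd.aemeasurable).1 hg

lemma integral_snd {g : ℝ → ℝ} (hg : AEStronglyMeasurable g G) :
    ∫ p, g p.2 ∂((gaussianReal 0 1).prod G) = ∫ x, g x ∂G := by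
  have hg' : AEStronglyMeasurable g (((gaussianReal 0 1).prod G).map Prod.snd) := by
    rwa [map_snd_eq]
  calc ∫ p, g p.2 ∂((gaussianReal 0 1).prod G)
      = ∫ x, g x ∂(((gaussianReal 0 1).prod G).map Prod.snd) :=
        (integral_map measurable_snd.aemeasurable hg').symm
    _ = ∫ x, g x ∂G := by rw [map_snd_eq]

end Stmt13Aux

/-- Under the null model (`Y` standard normal, independent of `γ ~ G`), `θ* = 0` is the
unique maximizer of `M(θ) = E[m_θ(Y,γ)]` over `Θ = [−K,K]`: `M(θ) < M(0)` for `θ ≠ 0`. -/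
theorem stmt13 (G : Measure ℝ) [IsProbabilityMeasure G]
    (hG : ∀ᵐ x ∂G, x ∈ Set.Icc (0 : ℝ) 1)
    (hVar : 0 < (∫ x, x ^ 2 ∂G) - (∫ x, x ∂G) ^ 2)
    (hlog : Integrable (fun x => -Real.log (1 - x)) G)
    (K : ℝ) (hK : 0 < K)
    (M : ℝ → ℝ) (hM : ∀ θ, M θ = ∫ p, mFun θ p ∂((gaussianReal 0 1).prod G)) :
    ∀ θ ∈ Set.Icc (-K) K, θ ≠ 0 → M θ < M 0 := by
  intro θ _ hθ0
  -- a.e. the second coordinate is in [0,1]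
  have hae2 : ∀ᵐ p ∂((gaussianReal 0 1).prod G), p.2 ∈ Set.Icc (0:ℝ) 1 := by
    have h := hG
    rw [← Stmt13Aux.map_snd_eq (G := G)] at h
    exact (ae_map_iff measurable_snd.aemeasurable measurableSet_Icc).1 h
  -- G gives positive mass to (0,1]
  have hGpos : G (Set.Ioi (0:ℝ)) ≠ 0 := by
    intro h0
    have h1 : ∀ᵐ x ∂G, x ∉ Set.Ioi (0:ℝ) := by
      rw [ae_iff]
      convert h0 using 2
      ext x; simp
    have hae : ∀ᵐ x ∂G, x = 0 := by
      filter_upwards [hG, h1] with x hx hx2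
      simp only [Set.mem_Ioi, not_lt] at hx2
      exact le_antisymm hx2 hx.1
    have h2 : ∫ x, x ^ 2 ∂G = 0 := by
      rw [integral_congr_ae (g := fun _ => (0:ℝ)) (hae.mono fun x hx => by simp [hx])]
      simp
    have h3 : ∫ x, x ∂G = 0 := by
      rw [integral_congr_ae (g := fun _ => (0:ℝ)) (hae.mono fun x hx => by simp [hx])]
      simp
    rw [h2, h3] at hVar
    norm_num at hVar
  set t : ℝ → ℝ := fun y => θ * y - θ ^ 2 / 2 with ht
  set E : ℝ → ℝ := fun y => Real.exp (t y) with hE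
  set f : ℝ × ℝ → ℝ := fun p => (1 - p.2) + E p.1 * p.2 with hf
  have hfm : Measurable f := by
    simp only [hf, hE, ht]
    exact (measurable_const.sub measurable_snd).add
      ((Real.measurable_exp.comp ((measurable_fst.const_mul θ).sub measurable_const)).mul
        measurable_snd)
  have hfpos : ∀ p : ℝ × ℝ, p.2 ∈ Set.Icc (0:ℝ) 1 → 0 < f p := by
    intro p hp
    rcases eq_or_lt_of_le hp.2 with h1 | h1
    · have h2 : f p = E p.1 := by simp [hf, h1]
      rw [h2]; exact Real.exp_pos _
    · have h2 : 0 ≤ E p.1 * p.2 := mul_nonneg (Real.exp_pos _).le hp.1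
      have h3 : (0:ℝ) < 1 - p.2 := by linarith
      simp only [hf]; linarith
  -- integrabilities
  have hsndI : Integrable (fun x : ℝ => x) G := by
    refine Integrable.mono' (integrable_const (1:ℝ)) measurable_id.aestronglyMeasurable ?_
    filter_upwards [hG] with x hx
    rw [Real.norm_eq_abs, abs_of_nonneg hx.1]; exact hx.2
  have h1mI : Integrable (fun x : ℝ => 1 - x) G := (integrable_const 1).sub hsndI
  have hEI : Integrable E (gaussianReal 0 1) := Stmt13Aux.int_exp θ
  have hfI : Integrable f ((gaussianReal 0 1).prod G) :=
    (Stmt13Aux.int_snd h1mI).add (hEI.mul_prod hsndI)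
  have hlogfI : Integrable (fun p => Real.log (f p)) ((gaussianReal 0 1).prod G) := by
    have habs : Integrable (fun y : ℝ => |θ| * |y| + (θ^2/2 + Real.log 2)) (gaussianReal 0 1) :=
      (Stmt13Aux.int_abs.const_mul _).add (integrable_const _)
    refine (Stmt13Aux.int_fst habs).mono'
      ((Real.measurable_log.comp hfm).aestronglyMeasurable) ?_
    filter_upwards [hae2] with p hp
    have hpos := hfpos p hp
    have htb : |t p.1| ≤ |θ| * |p.1| + θ^2/2 := by
      have h1 : |θ * p.1 - θ^2/2| ≤ |θ * p.1| + |θ^2/2| := abs_sub _ _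
      have h2 : |θ^2/2| = θ^2/2 := abs_of_nonneg (by positivity)
      rw [abs_mul] at h1
      simp only [ht]
      linarith
    have hub : f p ≤ 2 * Real.exp |t p.1| := by
      have hE1 : E p.1 ≤ Real.exp |t p.1| := Real.exp_le_exp.2 (le_abs_self _)
      have h1 : (1:ℝ) ≤ Real.exp |t p.1| := Real.one_le_exp (abs_nonneg _)
      simp only [hf]
      nlinarith [hp.1, hp.2]
    have hlb : Real.exp (-|t p.1|) ≤ f p := by
      have hE1 : Real.exp (-|t p.1|) ≤ E p.1 := Real.exp_le_exp.2 (neg_abs_le _)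
      have h1 : Real.exp (-|t p.1|) ≤ 1 := Real.exp_le_one_iff.2 (neg_nonpos.2 (abs_nonneg _))
      simp only [hf]
      nlinarith [hp.1, hp.2]
    have hlog2 : 0 ≤ Real.log 2 := Real.log_nonneg one_le_two
    rw [Real.norm_eq_abs, abs_le]
    constructor
    · have h4 := Real.log_le_log (Real.exp_pos _) hlb
      rw [Real.log_exp] at h4
      linarith
    · have h4 := Real.log_le_log hpos hub
      rw [Real.log_mul two_ne_zero (Real.exp_ne_zero _), Real.log_exp] at h4
      linarith
  have hlognI : Integrable (fun p : ℝ × ℝ => Real.log (npdf p.1 0))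
      ((gaussianReal 0 1).prod G) := Stmt13Aux.int_fst Stmt13Aux.int_log_npdf
  -- ∫ f = 1
  have hintf : ∫ p, f p ∂((gaussianReal 0 1).prod G) = 1 := by
    have hterm1 : ∫ p, (1 - p.2) ∂((gaussianReal 0 1).prod G) = ∫ x, (1 - x) ∂G :=
      Stmt13Aux.integral_snd h1mI.1
    have hterm2 : ∫ p : ℝ × ℝ, E p.1 * p.2 ∂((gaussianReal 0 1).prod G)
        = (∫ y, E y ∂(gaussianReal 0 1)) * ∫ x, x ∂G := integral_prod_mul E (fun x => x)
    rw [show (∫ p, f p ∂((gaussianReal 0 1).prod G))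
        = ∫ p : ℝ × ℝ, ((1 - p.2) + E p.1 * p.2) ∂((gaussianReal 0 1).prod G) from rfl,
      integral_add (Stmt13Aux.int_snd h1mI) (hEI.mul_prod hsndI), hterm1, hterm2,
      integral_sub (integrable_const 1) hsndI, integral_const, Stmt13Aux.integral_exp θ]
    simp
  -- positivity of the gap integral
  have hg0 : ∀ᵐ p ∂((gaussianReal 0 1).prod G), 0 ≤ f p - 1 - Real.log (f p) := by
    filter_upwards [hae2] with p hp
    have h1 := Real.log_le_sub_one_of_pos (hfpos p hp)
    linarith
  have hgI : Integrable (fun p => f p - 1 - Real.log (f p)) ((gaussianReal 0 1).prod G) :=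
    (hfI.sub (integrable_const 1)).sub hlogfI
  have hgpos : 0 < ∫ p, (f p - 1 - Real.log (f p)) ∂((gaussianReal 0 1).prod G) := by
    rcases (integral_nonneg_of_ae hg0).lt_or_eq with h | h
    · exact h
    exfalso
    have hzero : (fun p => f p - 1 - Real.log (f p)) =ᵐ[(gaussianReal 0 1).prod G] 0 :=
      (integral_eq_zero_iff_of_nonneg_ae hg0 hgI).1 h.symm
    have hnotin : ∀ᵐ p ∂((gaussianReal 0 1).prod G),
        p ∉ (({θ/2}ᶜ : Set ℝ) ×ˢ Set.Ioi (0:ℝ)) := by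
      filter_upwards [hzero, hae2] with p hzp hp
      intro hmem
      obtain ⟨h1, h2⟩ := hmem
      have hfne : f p ≠ 1 := by
        intro hfe
        have h3 : p.2 * (E p.1 - 1) = 0 := by
          simp only [hf] at hfe; ring_nf; ring_nf at hfe; linarith
        rcases mul_eq_zero.1 h3 with h4 | h4
        · exact (ne_of_gt (Set.mem_Ioi.1 h2)) h4
        · have hE1 : E p.1 = 1 := by linarith
          have ht0 : t p.1 = 0 := (Real.exp_eq_one_iff _).1 hE1
          have : p.1 = θ/2 := by
            simp only [ht] at ht0
            field_simp at ht0
            rcases mul_eq_zero.1 (by linarith : θ * (2 * p.1 - θ) = 0) with h5 | h5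
            · exact absurd h5 hθ0
            · linarith
          exact h1 (by simpa using this)
      have h5 := Real.log_lt_sub_one_of_pos (hfpos p hp) hfne
      have h6 : f p - 1 - Real.log (f p) = 0 := hzp
      linarith
    have hmeas0 : ((gaussianReal 0 1).prod G) ((({θ/2}ᶜ : Set ℝ)) ×ˢ Set.Ioi (0:ℝ)) = 0 := by
      rw [ae_iff] at hnotin
      convert hnotin using 2
      ext p; simp
    rw [Measure.prod_prod] at hmeas0
    have hμc : (gaussianReal 0 1) ({θ/2}ᶜ : Set ℝ) = 1 := by
      have h0 : (gaussianReal 0 1) {θ/2} = 0 :=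
        gaussianReal_absolutelyContinuous 0 one_ne_zero (Real.volume_singleton)
      rw [measure_compl (measurableSet_singleton _) (measure_ne_top _ _), h0]
      simp
    rw [hμc, one_mul] at hmeas0
    exact hGpos hmeas0
  -- hence ∫ log f < 0
  have hintlogf : ∫ p, Real.log (f p) ∂((gaussianReal 0 1).prod G) < 0 := by
    have hsub : ∫ p, (f p - 1 - Real.log (f p)) ∂((gaussianReal 0 1).prod G)
        = (∫ p, (f p - 1) ∂((gaussianReal 0 1).prod G))
          - ∫ p, Real.log (f p) ∂((gaussianReal 0 1).prod G) :=
      integral_sub (hfI.sub (integrable_const 1)) hlogfI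
    have h1 : ∫ p, (f p - 1) ∂((gaussianReal 0 1).prod G) = 0 := by
      rw [integral_sub hfI (integrable_const 1), hintf, integral_const]
      simp
    rw [hsub, h1] at hgpos
    linarith
  -- decompose M θ and M 0
  have hM0 : M 0 = ∫ p : ℝ × ℝ, Real.log (npdf p.1 0) ∂((gaussianReal 0 1).prod G) := by
    rw [hM 0]
    refine integral_congr_ae (Eventually.of_forall fun p => ?_)
    unfold mFun
    congr 1
    ring
  have hMθ : M θ = (∫ p : ℝ × ℝ, Real.log (npdf p.1 0) ∂((gaussianReal 0 1).prod G))
      + ∫ p, Real.log (f p) ∂((gaussianReal 0 1).prod G) := by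
    rw [hM θ]
    have hmθ : ∀ᵐ p ∂((gaussianReal 0 1).prod G),
        mFun θ p = Real.log (npdf p.1 0) + Real.log (f p) := by
      filter_upwards [hae2] with p hp
      have h1 : (1 - p.2) * npdf p.1 0 + p.2 * npdf p.1 θ = npdf p.1 0 * f p := by
        rw [Stmt13Aux.npdf_mul p.1 θ]
        simp only [hf, hE, ht]
        ring
      unfold mFun
      rw [h1, Real.log_mul (ne_of_gt (Stmt13Aux.npdf_pos _ _)) (ne_of_gt (hfpos p hp))]
    rw [integral_congr_ae hmθ, integral_add hlognI hlogfI]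
  rw [hMθ, hM0]
  linarith
end
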